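/- In a combinatorial horoball Hor(Γ), any two vertices (p,n) and (q,n) at the same level n with 0 < d_Γ(p,q) ≤ 2ⁿ are at distance exactly 1, and consequently the distance in Hor(Γ) between any two vertices (p,0) and (q,0) is at most 2·⌈log₂(d_Γ(p,q))⌉ + 1 for d_Γ(p,q) ≥ 1. -/

import Mathlib

/-- The combinatorial horoball over a simplicial graph `G`. -/
def SimpleGraph.horoball {V : Type*} (G : SimpleGraph V) : SimpleGraph (V × ℕ) where
  Adj x y := (x.1 = y.1 ∧ (x.2 = y.2 + 1 ∨ y.2 = x.2 + 1)) ∨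
    (x.2 = y.2 ∧ x.1 ≠ y.1 ∧ G.dist x.1 y.1 ≤ 2 ^ x.2)
  symm := by
    constructor
    rintro ⟨p, n⟩ ⟨q, m⟩ (⟨h1, h2⟩ | ⟨h1, h2, h3⟩)
    · exact Or.inl ⟨h1.symm, h2.symm⟩
    · refine Or.inr ⟨h1.symm, h2.symm, ?_⟩
      rw [G.dist_comm] at h3
      rwa [← h1]
  loopless := by
    constructor
    rintro ⟨p, n⟩ (⟨-, h⟩ | ⟨-, h, -⟩)
    · omega
    · exact h rfl

/-- A vertical walk in the horoball from `(p,0)` to `(p,n)` of length `n`. -/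
lemma horoball_vert_walk {V : Type*} (G : SimpleGraph V) (p : V) (n : ℕ) :
    ∃ w : G.horoball.Walk (p, 0) (p, n), w.length = n := by
  induction n with
  | zero => exact ⟨.nil, rfl⟩
  | succ n ih =>
    obtain ⟨w, hw⟩ := ih
    have hadj : G.horoball.Adj (p, n) (p, n + 1) := Or.inl ⟨rfl, Or.inr rfl⟩
    exact ⟨w.concat hadj, by simp [hw]⟩

/-- In a combinatorial horoball, two vertices `(p,n)`, `(q,n)` at the same level with
`0 < d_Γ(p,q) ≤ 2^n` are at distance exactly `1`; consequently the distance between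
`(p,0)` and `(q,0)` is at most `2⌈log₂ d_Γ(p,q)⌉ + 1` whenever `d_Γ(p,q) ≥ 1`. -/
theorem horoball_dist_upper_bound {V : Type*} (G : SimpleGraph V)
    (hconn : G.Connected) :
    (∀ (p q : V) (n : ℕ), 0 < G.dist p q → G.dist p q ≤ 2 ^ n →
      G.horoball.dist (p, n) (q, n) = 1) ∧
    (∀ p q : V, 1 ≤ G.dist p q →
      G.horoball.dist (p, 0) (q, 0) ≤ 2 * Nat.clog 2 (G.dist p q) + 1) := by
  have key : ∀ (p q : V) (n : ℕ), 0 < G.dist p q → G.dist p q ≤ 2 ^ n →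
      G.horoball.dist (p, n) (q, n) = 1 := by
    intro p q n hpos hle
    have hne : p ≠ q := by
      rintro rfl
      simp [SimpleGraph.dist_self] at hpos
    exact SimpleGraph.dist_eq_one_iff_adj.mpr (Or.inr ⟨rfl, hne, hle⟩)
  refine ⟨key, fun p q h1 => ?_⟩
  set k := Nat.clog 2 (G.dist p q) with hk
  have hle : G.dist p q ≤ 2 ^ k := Nat.le_pow_clog one_lt_two _
  have hadj : G.horoball.Adj (p, k) (q, k) := by
    have hne : p ≠ q := by
      rintro rfl
      simp [SimpleGraph.dist_self] at h1
    exact Or.inr ⟨rfl, hne, hle⟩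
  obtain ⟨w1, hw1⟩ := horoball_vert_walk G p k
  obtain ⟨w2, hw2⟩ := horoball_vert_walk G q k
  have := SimpleGraph.dist_le ((w1.concat hadj).append w2.reverse)
  simp only [SimpleGraph.Walk.length_append, SimpleGraph.Walk.length_concat,
    SimpleGraph.Walk.length_reverse, hw1, hw2] at this
  omega
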